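/- Let 𝒜 be an arrangement of n ≥ 2 pairwise non-proportional linear forms with rank-2 flats X₁,...,X_r of sizes n_u = |𝒜_{X_u}| ≥ 2. If Σ_{u=1}^r C(n_u−1, 2) = C(n−1, 2), then rank(𝒜) = 2 (equivalently r = 1 and n₁ = n). -/

import Mathlib

open MvPolynomial Finset Classical

noncomputable section

/-- The rank-2 flats of the arrangement defined by `ℓ`, encoded by the sets
`𝒜_X = {u | ℓ_u ∈ span(ℓᵢ, ℓⱼ)}` for pairs `i ≠ j`. -/
noncomputable def rank2Flats {K : Type*} [Field K] {k n : ℕ}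
    (ℓ : Fin n → MvPolynomial (Fin k) K) : Finset (Finset (Fin n)) :=
  Finset.image
    (fun p : Fin n × Fin n =>
      Finset.univ.filter (fun u => ℓ u ∈ Submodule.span K {ℓ p.1, ℓ p.2}))
    (Finset.univ.filter (fun p : Fin n × Fin n => p.1 ≠ p.2))

section Aux

lemma natId (m : ℕ) : m * (m - 1) = (m - 1) * (m - 2) + 2 * (m - 1) := by
  rcases m with _ | _ | k
  · rfl
  · rfl
  · show (k+2) * (k+1) = (k+1) * k + 2 * (k+1)
    ring

lemma two_choose_two (m : ℕ) : 2 * m.choose 2 = m * (m - 1) := by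
  rw [Nat.choose_two_right, Nat.mul_div_cancel']
  rcases m with _ | k
  · simp
  · simpa [Nat.succ_sub_one, mul_comm] using even_iff_two_dvd.mp (Nat.even_mul_succ_self k)

variable {K : Type*} [Field K] {k n : ℕ} {ℓ : Fin n → MvPolynomial (Fin k) K}
  (hne : ∀ i, ℓ i ≠ 0)
  (hprop : ∀ i j : Fin n, i ≠ j → ∀ c : K, ℓ i ≠ c • ℓ j)

def flatOf (ℓ : Fin n → MvPolynomial (Fin k) K) (i j : Fin n) : Finset (Fin n) :=
  Finset.univ.filter (fun u => ℓ u ∈ Submodule.span K {ℓ i, ℓ j})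

include hne hprop

lemma li_pair {i j : Fin n} (hij : i ≠ j) : LinearIndependent K ![ℓ i, ℓ j] := by
  rw [linearIndependent_fin2]
  refine ⟨by simpa using hne j, fun a h => ?_⟩
  simpa using hprop i j hij a h.symm

lemma finrank_pair {i j : Fin n} (hij : i ≠ j) :
    Module.finrank K (Submodule.span K {ℓ i, ℓ j}) = 2 := by
  have h := finrank_span_eq_card (li_pair hne hprop hij)
  have hr : Set.range ![ℓ i, ℓ j] = {ℓ i, ℓ j} := by
    simp only [Matrix.range_cons, Matrix.range_empty, Set.union_empty, Set.union_singleton]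
    exact Set.pair_comm _ _
  rw [hr] at h
  simpa using h

lemma span_pair_eq {a b i j : Fin n} (hab : a ≠ b) (hij : i ≠ j)
    (hi : ℓ i ∈ Submodule.span K {ℓ a, ℓ b}) (hj : ℓ j ∈ Submodule.span K {ℓ a, ℓ b}) :
    Submodule.span K {ℓ i, ℓ j} = Submodule.span K {ℓ a, ℓ b} := by
  haveI : FiniteDimensional K (Submodule.span K ({ℓ a, ℓ b} : Set (MvPolynomial (Fin k) K))) :=
    FiniteDimensional.span_of_finite K (Set.toFinite _)
  apply Submodule.eq_of_le_of_finrank_le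
  · rw [Submodule.span_le]
    rintro x (rfl | rfl)
    exacts [hi, hj]
  · rw [finrank_pair hne hprop hab, finrank_pair hne hprop hij]

omit hne hprop in
lemma mem_flatOf_left (i j : Fin n) : i ∈ flatOf ℓ i j := by
  simp only [flatOf, Finset.mem_filter, Finset.mem_univ, true_and]
  exact Submodule.subset_span (Set.mem_insert _ _)

omit hne hprop in
lemma mem_flatOf_right (i j : Fin n) : j ∈ flatOf ℓ i j := by
  simp only [flatOf, Finset.mem_filter, Finset.mem_univ, true_and]
  exact Submodule.subset_span (Set.mem_insert_of_mem _ rfl)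

omit hne hprop in
lemma flatOf_mem (i j : Fin n) (hij : i ≠ j) : flatOf ℓ i j ∈ rank2Flats ℓ := by
  rw [rank2Flats, Finset.mem_image]
  exact ⟨(i, j), by simpa using hij, rfl⟩

/-- key: a flat containing the distinct pair i,j equals flatOf i j. -/
lemma flat_unique {S : Finset (Fin n)} (hS : S ∈ rank2Flats ℓ) {i j : Fin n} (hij : i ≠ j)
    (hi : i ∈ S) (hj : j ∈ S) : S = flatOf ℓ i j := by
  rw [rank2Flats, Finset.mem_image] at hS
  obtain ⟨p, hp, rfl⟩ := hS
  have hab : p.1 ≠ p.2 := by simpa using hp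
  simp only [Finset.mem_filter, Finset.mem_univ, true_and] at hi hj
  have := span_pair_eq hne hprop hab hij hi hj
  unfold flatOf
  ext u
  simp [this]

omit hne hprop in
lemma flat_card_ge {S : Finset (Fin n)} (hS : S ∈ rank2Flats ℓ) : 2 ≤ S.card := by
  rw [rank2Flats, Finset.mem_image] at hS
  obtain ⟨p, hp, rfl⟩ := hS
  have hab : p.1 ≠ p.2 := by simpa using hp
  have h1 := mem_flatOf_left (ℓ := ℓ) p.1 p.2
  have h2 := mem_flatOf_right (ℓ := ℓ) p.1 p.2
  exact Finset.one_lt_card.mpr ⟨p.1, h1, p.2, h2, hab⟩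

/-- pairs partition -/
lemma sum_offDiag :
    ∑ S ∈ rank2Flats ℓ, S.card * (S.card - 1) = n * (n - 1) := by
  have hdisj : ∀ S ∈ rank2Flats ℓ, ∀ T ∈ rank2Flats ℓ, S ≠ T →
      Disjoint S.offDiag T.offDiag := by
    intro S hS T hT hST
    rw [Finset.disjoint_left]
    rintro ⟨i, j⟩ hpS hpT
    rw [Finset.mem_offDiag] at hpS hpT
    exact hST ((flat_unique hne hprop hS hpS.2.2 hpS.1 hpS.2.1).trans
      (flat_unique hne hprop hT hpT.2.2 hpT.1 hpT.2.1).symm)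
  have hcover : (rank2Flats ℓ).biUnion (fun S => S.offDiag) =
      (Finset.univ : Finset (Fin n)).offDiag := by
    ext ⟨i, j⟩
    simp only [Finset.mem_biUnion, Finset.mem_offDiag, Finset.mem_univ, true_and]
    constructor
    · rintro ⟨S, _, h⟩; exact h.2.2
    · intro hij
      exact ⟨flatOf ℓ i j, flatOf_mem i j hij,
        mem_flatOf_left i j, mem_flatOf_right i j, hij⟩
  calc ∑ S ∈ rank2Flats ℓ, S.card * (S.card - 1)
      = ∑ S ∈ rank2Flats ℓ, S.offDiag.card := by
        refine Finset.sum_congr rfl fun S _ => ?_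
        rw [Finset.offDiag_card, Nat.mul_sub, Nat.mul_one]
    _ = ((Finset.univ : Finset (Fin n)).offDiag).card := by
        rw [← hcover]; exact (Finset.card_biUnion hdisj).symm
    _ = n * (n - 1) := by
        rw [Finset.offDiag_card, Finset.card_univ, Fintype.card_fin, Nat.mul_sub, Nat.mul_one]

/-- flats through a point m partition the rest -/
lemma sum_through (m : Fin n) :
    ∑ S ∈ (rank2Flats ℓ).filter (fun S => m ∈ S), (S.card - 1) = n - 1 := by
  have hdisj : ∀ S ∈ (rank2Flats ℓ).filter (fun S => m ∈ S),
      ∀ T ∈ (rank2Flats ℓ).filter (fun S => m ∈ S), S ≠ T →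
      Disjoint (S.erase m) (T.erase m) := by
    intro S hS T hT hST
    rw [Finset.mem_filter] at hS hT
    rw [Finset.disjoint_left]
    intro j hjS hjT
    have hjm : j ≠ m := Finset.ne_of_mem_erase hjS
    exact hST ((flat_unique hne hprop hS.1 (Ne.symm hjm) hS.2 (Finset.mem_of_mem_erase hjS)).trans
      (flat_unique hne hprop hT.1 (Ne.symm hjm) hT.2 (Finset.mem_of_mem_erase hjT)).symm)
  have hcover : ((rank2Flats ℓ).filter (fun S => m ∈ S)).biUnion (fun S => S.erase m) =
      Finset.univ.erase m := by
    ext j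
    simp only [Finset.mem_biUnion, Finset.mem_filter, Finset.mem_erase, Finset.mem_univ,
      and_true]
    constructor
    · rintro ⟨S, _, hj, _⟩; exact hj
    · intro hjm
      exact ⟨flatOf ℓ m j, ⟨flatOf_mem m j (Ne.symm hjm), mem_flatOf_left m j⟩,
        hjm, mem_flatOf_right m j⟩
  have := Finset.card_biUnion hdisj
  rw [hcover, Finset.card_erase_of_mem (Finset.mem_univ m), Finset.card_univ,
    Fintype.card_fin] at this
  rw [this]
  refine Finset.sum_congr rfl fun S hS => ?_
  rw [Finset.mem_filter] at hS
  rw [Finset.card_erase_of_mem hS.2]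

end Aux

/-- For an arrangement of `n ≥ 2` pairwise non-proportional linear forms with rank-2 flats
`X₁,...,X_r` of sizes `n_u`, if `Σ_u C(n_u−1,2) = C(n−1,2)` then the arrangement has rank 2
(equivalently, `r = 1` and `n₁ = n`). -/
theorem stmt10 {K : Type*} [Field K] [CharZero K] {k n : ℕ} (hn : 2 ≤ n)
    (ℓ : Fin n → MvPolynomial (Fin k) K)
    (hhom : ∀ i, (ℓ i).IsHomogeneous 1)
    (hne : ∀ i, ℓ i ≠ 0)
    (hprop : ∀ i j : Fin n, i ≠ j → ∀ c : K, ℓ i ≠ c • ℓ j)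
    (hsum : ∑ S ∈ rank2Flats ℓ, (S.card - 1).choose 2 = (n - 1).choose 2) :
    Module.finrank K (Submodule.span K (Set.range ℓ)) = 2
    ∧ (rank2Flats ℓ).card = 1 ∧ ∀ S ∈ rank2Flats ℓ, S.card = n := by
  -- step 1: Σ (n_S − 1) = n − 1
  have hA := sum_offDiag hne hprop
  have hB : ∑ S ∈ rank2Flats ℓ, (S.card - 1) * (S.card - 2) = (n - 1) * (n - 2) := by
    have := congrArg (2 * ·) hsum
    simp only [Finset.mul_sum] at this
    rw [Finset.sum_congr rfl (fun S _ => two_choose_two (S.card - 1)),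
      two_choose_two (n - 1)] at this
    convert this using 2 <;> simp [Nat.sub_sub]
  have hC : ∑ S ∈ rank2Flats ℓ, (S.card - 1) = n - 1 := by
    have h1 : ∑ S ∈ rank2Flats ℓ, S.card * (S.card - 1)
        = ∑ S ∈ rank2Flats ℓ, ((S.card - 1) * (S.card - 2) + 2 * (S.card - 1)) :=
      Finset.sum_congr rfl fun S _ => natId _
    rw [Finset.sum_add_distrib, hB, ← Finset.mul_sum] at h1
    rw [hA, natId n] at h1
    omega
  -- step 2: every flat contains every point
  have hall : ∀ S ∈ rank2Flats ℓ, ∀ m : Fin n, m ∈ S := by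
    intro S hS m
    by_contra hm
    have hsplit := Finset.sum_filter_add_sum_filter_not (rank2Flats ℓ)
      (fun S => m ∈ S) (fun S => S.card - 1)
    rw [sum_through hne hprop m, hC] at hsplit
    have hzero : ∑ T ∈ (rank2Flats ℓ).filter (fun T => ¬ m ∈ T), (T.card - 1) = 0 := by
      omega
    have hSmem : S ∈ (rank2Flats ℓ).filter (fun T => ¬ m ∈ T) :=
      Finset.mem_filter.mpr ⟨hS, hm⟩
    have := Finset.sum_eq_zero_iff.mp hzero S hSmem
    have := flat_card_ge hS
    omega
  have huniv : ∀ S ∈ rank2Flats ℓ, S = Finset.univ := by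
    intro S hS
    exact Finset.eq_univ_iff_forall.mpr (hall S hS)
  -- indices 0 and 1
  have h01 : (⟨0, by omega⟩ : Fin n) ≠ ⟨1, by omega⟩ := by
    simp [Fin.ext_iff]
  have hF := flatOf_mem (ℓ := ℓ) _ _ h01
  have hFuniv := huniv _ hF
  refine ⟨?_, ?_, ?_⟩
  · -- finrank
    have hspan : Submodule.span K (Set.range ℓ)
        = Submodule.span K {ℓ ⟨0, by omega⟩, ℓ ⟨1, by omega⟩} := by
      apply le_antisymm
      · rw [Submodule.span_le]
        rintro x ⟨u, rfl⟩
        have : u ∈ flatOf ℓ ⟨0, by omega⟩ ⟨1, by omega⟩ := hFuniv ▸ Finset.mem_univ u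
        simpa [flatOf] using this
      · apply Submodule.span_mono
        rintro x (rfl | rfl) <;> exact ⟨_, rfl⟩
    rw [hspan]
    exact finrank_pair hne hprop h01
  · -- card = 1
    rw [Finset.card_eq_one]
    exact ⟨Finset.univ, Finset.eq_singleton_iff_unique_mem.mpr ⟨hFuniv ▸ hF, huniv⟩⟩
  · intro S hS
    rw [huniv S hS, Finset.card_univ, Fintype.card_fin]

end
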